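/- Fix a step t ≤ T of the DR-ns algorithm and a history z_{k−1} such that the k-th exploration sample begins the t-th block, inducing target history h_{t−1} and multiplier c_t. Define the bad event E_m = {(x,a) : c_t π_t(a|x) > μ_m(a|x)} and bias mass ε_m = P_{(x,a)∼π_t}[E_m] − P_{(x,a)∼μ_m}[E_m]/c_t, and assume 0 ≤ ε_m ≤ ε < 1 for all m. Then the total variation distance between the law of the accepted pair (x_{κ(t)}, a_{κ(t)}) under the algorithm and the target distribution π_t satisfies Σ_{x,a} |Pr_k[x_{κ(t)}=x, a_{κ(t)}=a] − π_t(x,a)| ≤ 2ε/(1−ε). -/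

import Mathlib

open Finset
open scoped Classical

/-- Total variation bound for the law of the accepted pair in the rejection sampling
step of DR-ns (first part of Lemma 5.2): the accepted context-action pair is within
total variation `2ε/(1−ε)` of the target distribution `π_t`. -/
theorem stmt12 {X A : Type*} [Fintype X] [Fintype A]
    (D : X → ℝ) (pit : X → A → ℝ) (mu : ℕ → X → A → ℝ) (c ε : ℝ)
    (hD0 : ∀ x, 0 ≤ D x) (hD1 : ∑ x, D x = 1)
    (hpit0 : ∀ x a, 0 ≤ pit x a) (hpit1 : ∀ x, ∑ a, pit x a = 1)
    (hmu0 : ∀ m x a, 0 ≤ mu m x a) (hmu1 : ∀ m x, ∑ a, mu m x a = 1)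
    (hc : 0 < c) (hc1 : c ≤ 1) (hε : ε < 1)
    (accept : ℕ → X → A → ℝ)
    (haccept : ∀ m x a, accept m x a = D x * min (mu m x a) (c * pit x a))
    (Am : ℕ → ℝ) (hAm : ∀ m, Am m = ∑ x, ∑ a, accept m x a)
    (eps : ℕ → ℝ)
    (heps : ∀ m, eps m =
      (∑ x, ∑ a, if c * pit x a > mu m x a then D x * pit x a else 0)
        - (∑ x, ∑ a, if c * pit x a > mu m x a then D x * mu m x a else 0) / c)
    (hepsb : ∀ m, 0 ≤ eps m ∧ eps m ≤ ε)
    (Law : X → A → ℝ)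
    (hLaw : ∀ x a, Law x a =
      ∑' m : ℕ, accept m x a * ∏ j ∈ Finset.range m, (1 - Am j)) :
    ∑ x, ∑ a, |Law x a - D x * pit x a| ≤ 2 * ε / (1 - ε) := by
  classical
  have hε0 : 0 ≤ ε := le_trans (hepsb 0).1 (hepsb 0).2
  have h1ε : 0 < 1 - ε := by linarith
  set w : ℕ → ℝ := fun m => ∏ j ∈ Finset.range m, (1 - Am j) with hwdef
  set r : ℝ := 1 - c * (1 - ε) with hrdef
  set f : ℕ → X → A → ℝ :=
    fun m x a => if c * pit x a > mu m x a then c * pit x a - mu m x a else 0 with hfdef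
  have hf0 : ∀ m x a, 0 ≤ f m x a := by
    intro m x a
    simp only [hfdef]
    split
    · linarith
    · exact le_refl 0
  have hmin : ∀ m x a, min (mu m x a) (c * pit x a) = c * pit x a - f m x a := by
    intro m x a
    simp only [hfdef]
    split_ifs with h
    · rw [min_eq_left h.le]; ring
    · rw [min_eq_right (not_lt.1 h)]; ring
  -- basic mass identity
  have hDpit : ∑ x, ∑ a, D x * pit x a = 1 := by
    have h1 : ∀ x : X, ∑ a, D x * pit x a = D x := by
      intro x; rw [← Finset.mul_sum, hpit1, mul_one]
    calc ∑ x, ∑ a, D x * pit x a = ∑ x, D x := Finset.sum_congr rfl fun x _ => h1 x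
      _ = 1 := hD1
  -- the bias mass identity
  have hceps : ∀ m, ∑ x, ∑ a, D x * f m x a = c * eps m := by
    intro m
    have hpt : ∀ x a, D x * f m x a =
        c * (if c * pit x a > mu m x a then D x * pit x a else 0)
          - (if c * pit x a > mu m x a then D x * mu m x a else 0) := by
      intro x a
      simp only [hfdef]
      split_ifs with h
      · ring
      · ring
    have h2 : ∑ x, ∑ a, D x * f m x a =
        c * (∑ x, ∑ a, if c * pit x a > mu m x a then D x * pit x a else 0)
          - (∑ x, ∑ a, if c * pit x a > mu m x a then D x * mu m x a else 0) := by
      simp only [Finset.mul_sum, ← Finset.sum_sub_distrib]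
      exact Finset.sum_congr rfl fun x _ => Finset.sum_congr rfl fun a _ => hpt x a
    rw [h2, heps m]
    field_simp
  have hAmeq : ∀ m, Am m = c * (1 - eps m) := by
    intro m
    have h2 : ∀ x a, accept m x a = c * (D x * pit x a) - D x * f m x a := by
      intro x a; rw [haccept, hmin]; ring
    calc Am m = ∑ x, ∑ a, (c * (D x * pit x a) - D x * f m x a) := by
          rw [hAm]
          exact Finset.sum_congr rfl fun x _ => Finset.sum_congr rfl fun a _ => h2 x a
      _ = c * (∑ x, ∑ a, D x * pit x a) - ∑ x, ∑ a, D x * f m x a := by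
          simp only [Finset.mul_sum, ← Finset.sum_sub_distrib]
      _ = c * 1 - c * eps m := by rw [hDpit, hceps]
      _ = c * (1 - eps m) := by ring
  have hAm_lb : ∀ m, c * (1 - ε) ≤ Am m := by
    intro m
    rw [hAmeq m]
    have := (hepsb m).2
    nlinarith
  have hAm_ub : ∀ m, Am m ≤ c := by
    intro m
    rw [hAmeq m]
    have := (hepsb m).1
    nlinarith
  have h1Am0 : ∀ m, 0 ≤ 1 - Am m := fun m => by have := hAm_ub m; linarith
  have h1Amr : ∀ m, 1 - Am m ≤ r := fun m => by have := hAm_lb m; rw [hrdef]; linarith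
  have hr0 : 0 ≤ r := le_trans (h1Am0 0) (h1Amr 0)
  have hr1 : r < 1 := by
    have : 0 < c * (1 - ε) := mul_pos hc h1ε
    rw [hrdef]; linarith
  have hgeom : Summable (fun m : ℕ => r ^ m) := summable_geometric_of_lt_one hr0 hr1
  have hw0 : ∀ m, 0 ≤ w m := by
    intro m
    exact Finset.prod_nonneg fun j _ => h1Am0 j
  have hwr : ∀ m, w m ≤ r ^ m := by
    intro m
    calc w m ≤ ∏ _j ∈ Finset.range m, r :=
          Finset.prod_le_prod (fun j _ => h1Am0 j) (fun j _ => h1Amr j)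
      _ = r ^ m := by rw [Finset.prod_const, Finset.card_range]
  have hwsum : Summable w := Summable.of_nonneg_of_le hw0 hwr hgeom
  have hwts : ∑' m, w m ≤ (c * (1 - ε))⁻¹ := by
    have h1 : ∑' m, w m ≤ ∑' m : ℕ, r ^ m := Summable.tsum_le_tsum hwr hwsum hgeom
    rw [tsum_geometric_of_lt_one hr0 hr1] at h1
    have h2 : 1 - r = c * (1 - ε) := by rw [hrdef]; ring
    rwa [h2] at h1
  -- Am m nonneg etc.
  have hAm0 : ∀ m, 0 ≤ Am m := by
    intro m
    exact le_trans (le_of_lt (mul_pos hc h1ε)) (hAm_lb m)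
  have hAmw_sum : Summable (fun m => Am m * w m) := by
    apply Summable.of_nonneg_of_le (fun m => mul_nonneg (hAm0 m) (hw0 m)) _ hgeom
    intro m
    calc Am m * w m ≤ 1 * w m :=
          mul_le_mul_of_nonneg_right (le_trans (hAm_ub m) hc1) (hw0 m)
      _ = w m := one_mul _
      _ ≤ r ^ m := hwr m
  have hwsucc : ∀ m, w (m + 1) = w m * (1 - Am m) := by
    intro m; simp only [hwdef, Finset.prod_range_succ]
  have htel : ∀ N, ∑ m ∈ Finset.range N, Am m * w m = 1 - w N := by
    intro N
    induction N with
    | zero => simp [hwdef]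
    | succ N ih =>
        rw [Finset.sum_range_succ, ih, hwsucc N]; ring
  have hwlim : Filter.Tendsto w Filter.atTop (nhds 0) :=
    squeeze_zero hw0 hwr (tendsto_pow_atTop_nhds_zero_of_lt_one hr0 hr1)
  have hS1 : ∑' m, Am m * w m = 1 := by
    apply HasSum.tsum_eq
    rw [Summable.hasSum_iff_tendsto_nat hAmw_sum]
    have : Filter.Tendsto (fun N => 1 - w N) Filter.atTop (nhds 1) := by
      simpa using Filter.Tendsto.sub tendsto_const_nhds hwlim
    simpa [htel] using this
  -- pointwise bounds on accept
  have hacc0 : ∀ m x a, 0 ≤ accept m x a := by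
    intro m x a
    rw [haccept]
    exact mul_nonneg (hD0 x) (le_min (hmu0 m x a) (mul_nonneg hc.le (hpit0 x a)))
  have hacc_le : ∀ m x a, accept m x a ≤ c * (D x * pit x a) := by
    intro m x a
    rw [haccept]
    calc D x * min (mu m x a) (c * pit x a) ≤ D x * (c * pit x a) :=
          mul_le_mul_of_nonneg_left (min_le_right _ _) (hD0 x)
      _ = c * (D x * pit x a) := by ring
  set B : ℕ → X → A → ℝ := fun m x a => |Am m * (D x * pit x a) - accept m x a| with hBdef
  have hB_le : ∀ m x a, B m x a ≤ (1 + c) * (D x * pit x a) := by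
    intro m x a
    have h1 : 0 ≤ D x * pit x a := mul_nonneg (hD0 x) (hpit0 x a)
    have h2 : Am m * (D x * pit x a) ≤ 1 * (D x * pit x a) :=
      mul_le_mul_of_nonneg_right (le_trans (hAm_ub m) hc1) h1
    have h3 := hacc0 m x a
    have h4 := hacc_le m x a
    have h5 : 0 ≤ Am m * (D x * pit x a) := mul_nonneg (hAm0 m) h1
    simp only [hBdef]
    rw [abs_le]
    constructor <;> nlinarith
  have hBw_sum : ∀ x a, Summable (fun m => B m x a * w m) := by
    intro x a
    refine Summable.of_nonneg_of_le
      (fun m => mul_nonneg (abs_nonneg _) (hw0 m)) (fun m => ?_)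
      (hgeom.mul_left ((1 + c) * (D x * pit x a)))
    have h1 : 0 ≤ (1 + c) * (D x * pit x a) :=
      mul_nonneg (by linarith) (mul_nonneg (hD0 x) (hpit0 x a))
    exact mul_le_mul (hB_le m x a) (hwr m) (hw0 m) h1
  have hacc_sum : ∀ x a, Summable (fun m => accept m x a * w m) := by
    intro x a
    refine Summable.of_nonneg_of_le
      (fun m => mul_nonneg (hacc0 m x a) (hw0 m)) (fun m => ?_)
      (hgeom.mul_left (c * (D x * pit x a)))
    have h1 : 0 ≤ c * (D x * pit x a) :=
      mul_nonneg hc.le (mul_nonneg (hD0 x) (hpit0 x a))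
    exact mul_le_mul (hacc_le m x a) (hwr m) (hw0 m) h1
  -- the per-point difference identity and bound
  have habs : ∀ x a, |Law x a - D x * pit x a| ≤ ∑' m, B m x a * w m := by
    intro x a
    have hdiff : D x * pit x a - Law x a =
        ∑' m, (Am m * (D x * pit x a) - accept m x a) * w m := by
      calc D x * pit x a - Law x a
          = (∑' m, Am m * w m * (D x * pit x a)) - ∑' m, accept m x a * w m := by
            rw [hLaw, tsum_mul_right, hS1, one_mul]
        _ = ∑' m, (Am m * w m * (D x * pit x a) - accept m x a * w m) :=
            (Summable.tsum_sub (hAmw_sum.mul_right _) (hacc_sum x a)).symm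
        _ = ∑' m, (Am m * (D x * pit x a) - accept m x a) * w m :=
            tsum_congr fun m => by ring
    have hsn : Summable (fun m => ‖(Am m * (D x * pit x a) - accept m x a) * w m‖) := by
      have : (fun m => ‖(Am m * (D x * pit x a) - accept m x a) * w m‖)
          = fun m => B m x a * w m := by
        funext m
        simp only [hBdef]; rw [Real.norm_eq_abs, abs_mul, abs_of_nonneg (hw0 m)]
      rw [this]
      exact hBw_sum x a
    have h2 := norm_tsum_le_tsum_norm hsn
    rw [abs_sub_comm, hdiff]
    calc |∑' m, (Am m * (D x * pit x a) - accept m x a) * w m|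
        ≤ ∑' m, ‖(Am m * (D x * pit x a) - accept m x a) * w m‖ := by
          simpa [Real.norm_eq_abs] using h2
      _ = ∑' m, B m x a * w m :=
          tsum_congr fun m => by
            simp only [hBdef]; rw [Real.norm_eq_abs, abs_mul, abs_of_nonneg (hw0 m)]
  -- per-m total mass bound
  have hkey : ∀ m, ∑ x, ∑ a, B m x a ≤ 2 * c * ε := by
    intro m
    have hid : ∀ x a, Am m * (D x * pit x a) - accept m x a =
        D x * f m x a - c * eps m * (D x * pit x a) := by
      intro x a
      rw [haccept, hmin, hAmeq]; ring
    have hpt : ∀ x a, B m x a ≤ D x * f m x a + c * eps m * (D x * pit x a) := by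
      intro x a
      simp only [hBdef]
      rw [hid x a]
      have h1 : 0 ≤ D x * f m x a := mul_nonneg (hD0 x) (hf0 m x a)
      have h2 : 0 ≤ c * eps m * (D x * pit x a) :=
        mul_nonneg (mul_nonneg hc.le (hepsb m).1) (mul_nonneg (hD0 x) (hpit0 x a))
      rw [abs_le]
      constructor <;> nlinarith
    calc ∑ x, ∑ a, B m x a
        ≤ ∑ x, ∑ a, (D x * f m x a + c * eps m * (D x * pit x a)) :=
          Finset.sum_le_sum fun x _ => Finset.sum_le_sum fun a _ => hpt x a
      _ = (∑ x, ∑ a, D x * f m x a) + c * eps m * (∑ x, ∑ a, D x * pit x a) := by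
          simp only [Finset.sum_add_distrib, Finset.mul_sum]
      _ = c * eps m + c * eps m := by rw [hceps, hDpit, mul_one]
      _ ≤ 2 * c * ε := by
          have h1 := (hepsb m).2
          nlinarith
  -- summability of the grouped series
  have hgroup_sum : Summable (fun m => ∑ x, ∑ a, B m x a * w m) :=
    summable_sum fun x _ => summable_sum fun a _ => hBw_sum x a
  -- swap sums
  have hswap : ∑ x, ∑ a, ∑' m, B m x a * w m = ∑' m, ∑ x, ∑ a, B m x a * w m := by
    rw [Summable.tsum_finsetSum (fun x _ => summable_sum fun a _ => hBw_sum x a)]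
    exact Finset.sum_congr rfl fun x _ => (Summable.tsum_finsetSum (fun a _ => hBw_sum x a)).symm
  have hfinal : ∑ x, ∑ a, |Law x a - D x * pit x a| ≤ 2 * c * ε * (c * (1 - ε))⁻¹ := by
    calc ∑ x, ∑ a, |Law x a - D x * pit x a|
        ≤ ∑ x, ∑ a, ∑' m, B m x a * w m :=
          Finset.sum_le_sum fun x _ => Finset.sum_le_sum fun a _ => habs x a
      _ = ∑' m, ∑ x, ∑ a, B m x a * w m := hswap
      _ ≤ ∑' m, 2 * c * ε * w m := by
          apply Summable.tsum_le_tsum _ hgroup_sum (hwsum.mul_left _)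
          intro m
          have h1 : ∑ x, ∑ a, B m x a * w m = (∑ x, ∑ a, B m x a) * w m := by
            simp only [Finset.sum_mul]
          rw [h1]
          exact mul_le_mul_of_nonneg_right (hkey m) (hw0 m)
      _ = 2 * c * ε * ∑' m, w m := tsum_mul_left
      _ ≤ 2 * c * ε * (c * (1 - ε))⁻¹ := by
          apply mul_le_mul_of_nonneg_left hwts
          positivity
  have heq : 2 * c * ε * (c * (1 - ε))⁻¹ = 2 * ε / (1 - ε) := by
    field_simp
  rwa [heq] at hfinal
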